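/- The group of translations by real vectors acting on entire functions of d complex variables has the Runge property; concretely: for every R > 0 there exists C > 0 such that for any N ≥ 1, any b_1, …, b_N ∈ ℝ^d ⊂ ℂ^d with ‖b_i − b_j‖ ≥ C for all i ≠ j, any entire functions g_1, …, g_N : ℂ^d → ℂ and any ε > 0, there exists an entire function f : ℂ^d → ℂ such that sup_{‖z‖≤R} |f(z + b_i) − g_i(z)| < ε for each i = 1, …, N. -/

import Mathlib

/-- The embedding of `ℝ^d` into `ℂ^d`. -/
noncomputable def embedRC {d : ℕ} (x : EuclideanSpace ℝ (Fin d)) :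
    EuclideanSpace ℂ (Fin d) :=
  WithLp.toLp 2 (fun k => (x k : ℂ))

namespace Stmt15
open Finset

variable {d : ℕ}

noncomputable def reVec (w : EuclideanSpace ℂ (Fin d)) : EuclideanSpace ℝ (Fin d) :=
  WithLp.toLp 2 (fun k => (w k).re)

noncomputable def imVec (w : EuclideanSpace ℂ (Fin d)) : EuclideanSpace ℝ (Fin d) :=
  WithLp.toLp 2 (fun k => (w k).im)

/-- The shifted complex quadratic `∑ (w k + a k)^2`. -/
noncomputable def Q (a : EuclideanSpace ℝ (Fin d)) (w : EuclideanSpace ℂ (Fin d)) : ℂ :=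
  ∑ k, (w k + (a k : ℂ))^2

set_option maxHeartbeats 1000000 in
lemma Q_diff (a : EuclideanSpace ℝ (Fin d)) : Differentiable ℂ (Q a) := by
  unfold Q
  exact Differentiable.fun_sum fun k _ =>
    (((EuclideanSpace.proj (𝕜 := ℂ) k).differentiable).add_const (a k : ℂ)).pow 2

lemma norm_sq_eucl (x : EuclideanSpace ℝ (Fin d)) : ‖x‖^2 = ∑ k, (x k)^2 := by
  rw [EuclideanSpace.norm_eq, Real.sq_sqrt (by positivity)]
  simp [Real.norm_eq_abs, sq_abs]

lemma Q_re (a : EuclideanSpace ℝ (Fin d)) (w : EuclideanSpace ℂ (Fin d)) :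
    (Q a w).re = ‖reVec w + a‖^2 - ‖imVec w‖^2 := by
  simp only [Q, Complex.re_sum, norm_sq_eucl]
  rw [← Finset.sum_sub_distrib]
  refine Finset.sum_congr rfl fun k _ => ?_
  simp [pow_two, Complex.mul_re, reVec, imVec, PiLp.add_apply]

lemma Q_im (a : EuclideanSpace ℝ (Fin d)) (w : EuclideanSpace ℂ (Fin d)) :
    (Q a w).im = 2 * (inner ℝ (reVec w + a) (imVec w) : ℝ) := by
  simp only [Q, Complex.im_sum, PiLp.inner_apply, RCLike.inner_apply, conj_trivial,
    Finset.mul_sum]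
  refine Finset.sum_congr rfl fun k _ => ?_
  simp [pow_two, Complex.mul_im, reVec, imVec, PiLp.add_apply]
  ring

lemma normsq_decomp (w : EuclideanSpace ℂ (Fin d)) :
    ‖reVec w‖^2 + ‖imVec w‖^2 = ‖w‖^2 := by
  rw [norm_sq_eucl, norm_sq_eucl, EuclideanSpace.norm_eq, Real.sq_sqrt (by positivity),
    ← Finset.sum_add_distrib]
  refine Finset.sum_congr rfl fun k _ => ?_
  rw [Complex.sq_norm, Complex.normSq_apply]
  simp [reVec, imVec, pow_two]

lemma Q_shift (a c : EuclideanSpace ℝ (Fin d)) (w : EuclideanSpace ℂ (Fin d)) :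
    Q a (w + embedRC c) = Q (c + a) w := by
  unfold Q
  refine Finset.sum_congr rfl fun k _ => ?_
  have h1 : (w + embedRC c) k = w k + (c k : ℂ) := by simp [embedRC]
  have h2 : (c + a) k = c k + a k := rfl
  rw [h1, h2]
  push_cast
  ring

lemma Q_zero_abs (w : EuclideanSpace ℂ (Fin d)) : ‖Q 0 w‖ ≤ ‖w‖^2 := by
  unfold Q
  calc ‖∑ k, (w k + ((0 : EuclideanSpace ℝ (Fin d)) k : ℂ))^2‖
      ≤ ∑ k, ‖(w k + ((0 : EuclideanSpace ℝ (Fin d)) k : ℂ))^2‖ :=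
        norm_sum_le _ _
    _ = ∑ k, ‖w k‖^2 := by
        refine Finset.sum_congr rfl fun k _ => ?_
        have : ((0 : EuclideanSpace ℝ (Fin d)) k : ℂ) = 0 := by simp
        rw [this, add_zero, norm_pow]
    _ = ‖w‖^2 := by
        rw [EuclideanSpace.norm_eq, Real.sq_sqrt (by positivity)]

lemma cross_re {R : ℝ} (hR : 0 < R) (a : EuclideanSpace ℝ (Fin d))
    (w : EuclideanSpace ℂ (Fin d)) (ha : 10*R ≤ ‖a‖) (hw : ‖w‖ ≤ R) :
    6075 * R^4 ≤ ((Q a w)^2).re := by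
  have hre : ((Q a w)^2).re = (Q a w).re^2 - (Q a w).im^2 := by
    rw [pow_two, Complex.mul_re]; ring
  set X := ‖reVec w + a‖ with hX
  set q := ‖imVec w‖ with hq
  set p := ‖reVec w‖ with hp
  have hpq : p^2 + q^2 ≤ R^2 := by
    rw [normsq_decomp]; exact pow_le_pow_left₀ (norm_nonneg _) hw 2
  have hp0 : 0 ≤ p := norm_nonneg _
  have hq0 : 0 ≤ q := norm_nonneg _
  have hX0 : 0 ≤ X := norm_nonneg _
  have hqR : q ≤ R := by nlinarith
  have hpR : p ≤ R := by nlinarith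
  have hXlb : 9*R ≤ X := by
    have h : ‖a‖ ≤ X + p := by
      calc ‖a‖ = ‖(reVec w + a) - reVec w‖ := by rw [add_sub_cancel_left]
        _ ≤ X + p := by rw [hX, hp]; exact norm_sub_le _ _
    linarith
  have him : |(Q a w).im| ≤ 2 * X * q := by
    rw [Q_im]
    rw [abs_mul]
    have := abs_real_inner_le_norm (reVec w + a) (imVec w)
    calc |(2:ℝ)| * |(inner ℝ (reVec w + a) (imVec w) : ℝ)| ≤ 2 * (X * q) := by
          rw [abs_two]; exact mul_le_mul_of_nonneg_left this (by norm_num)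
      _ = 2 * X * q := by ring
  have him2 : (Q a w).im^2 ≤ 4 * X^2 * q^2 := by
    have h1 : (Q a w).im^2 = |(Q a w).im|^2 := (sq_abs _).symm
    rw [h1]
    nlinarith [abs_nonneg (Q a w).im]
  rw [hre, Q_re, ← hX, ← hq]
  have hX2 : 81 * R^2 ≤ X^2 := by nlinarith
  nlinarith [sq_nonneg q, sq_nonneg (X^2 - q^2), mul_le_mul hX2 hX2 (by positivity) (by positivity)]

noncomputable def pstep (z : ℂ) : ℂ := 3*z^2 - 2*z^3

noncomputable def Pit : ℕ → ℂ → ℂ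
  | 0 => id
  | (n+1) => pstep ∘ Pit n

lemma pstep_diff : Differentiable ℂ pstep := by
  unfold pstep; fun_prop

lemma Pit_diff (n : ℕ) : Differentiable ℂ (Pit n) := by
  induction n with
  | zero => exact differentiable_id
  | succ n ih => exact pstep_diff.comp ih

lemma pstep0 {u : ℂ} (h : ‖u‖ ≤ 1/10) :
    ‖pstep u‖ ≤ ‖u‖ / 3 := by
  have h1 : pstep u = u^2 * (3 - 2*u) := by unfold pstep; ring
  rw [h1, norm_mul, norm_pow]
  have h2 : ‖3 - 2*u‖ ≤ 16/5 := by
    calc ‖3 - 2*u‖ ≤ ‖(3:ℂ)‖ + ‖2*u‖ := by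
          exact norm_sub_le (3:ℂ) (2*u)
      _ ≤ 16/5 := by
          rw [norm_mul]
          simp only [Complex.norm_ofNat]
          nlinarith [norm_nonneg u]
  have h0 : 0 ≤ ‖u‖ := norm_nonneg u
  nlinarith

lemma pstep1 {u : ℂ} (h : ‖u - 1‖ ≤ 1/10) :
    ‖pstep u - 1‖ ≤ ‖u - 1‖ / 3 := by
  have h1 : pstep u - 1 = -((u-1)^2 * (2*u + 1)) := by unfold pstep; ring
  rw [h1, norm_neg, norm_mul, norm_pow]
  have h2 : ‖2*u + 1‖ ≤ 16/5 := by
    have h3 : (2*u + 1 : ℂ) = 2*(u-1) + 3 := by ring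
    rw [h3]
    calc ‖2*(u-1) + 3‖ ≤ ‖2*(u-1)‖ + ‖(3:ℂ)‖ :=
          norm_add_le _ _
      _ ≤ 16/5 := by
          rw [norm_mul]
          simp only [Complex.norm_ofNat]
          nlinarith [norm_nonneg (u-1)]
  have h0 : 0 ≤ ‖u-1‖ := norm_nonneg _
  nlinarith

lemma Pit0 {u : ℂ} (h : ‖u‖ ≤ 1/10) (n : ℕ) :
    ‖Pit n u‖ ≤ (1/3)^n * ‖u‖ := by
  induction n with
  | zero => simp [Pit]
  | succ n ih =>
    have hle : ‖Pit n u‖ ≤ 1/10 := by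
      refine ih.trans ?_
      calc (1/3:ℝ)^n * ‖u‖ ≤ 1 * ‖u‖ := by
            apply mul_le_mul_of_nonneg_right _ (norm_nonneg u)
            exact pow_le_one₀ (by norm_num) (by norm_num)
        _ = ‖u‖ := one_mul _
        _ ≤ 1/10 := h
    have hstep : ‖Pit (n+1) u‖ ≤ ‖Pit n u‖ / 3 := pstep0 hle
    calc ‖Pit (n+1) u‖ ≤ ‖Pit n u‖ / 3 := hstep
      _ ≤ ((1/3)^n * ‖u‖) / 3 := by linarith
      _ = (1/3)^(n+1) * ‖u‖ := by ring

lemma Pit1 {u : ℂ} (h : ‖u - 1‖ ≤ 1/10) (n : ℕ) :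
    ‖Pit n u - 1‖ ≤ (1/3)^n * ‖u - 1‖ := by
  induction n with
  | zero => simp [Pit]
  | succ n ih =>
    have hle : ‖Pit n u - 1‖ ≤ 1/10 := by
      refine ih.trans ?_
      calc (1/3:ℝ)^n * ‖u-1‖ ≤ 1 * ‖u-1‖ := by
            apply mul_le_mul_of_nonneg_right _ (norm_nonneg _)
            exact pow_le_one₀ (by norm_num) (by norm_num)
        _ = ‖u-1‖ := one_mul _
        _ ≤ 1/10 := h
    have hstep : ‖Pit (n+1) u - 1‖ ≤ ‖Pit n u - 1‖ / 3 := pstep1 hle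
    calc ‖Pit (n+1) u - 1‖ ≤ ‖Pit n u - 1‖ / 3 := hstep
      _ ≤ ((1/3)^n * ‖u-1‖) / 3 := by linarith
      _ = (1/3)^(n+1) * ‖u-1‖ := by ring

lemma log10_le : Real.log 10 ≤ 9 := by
  have := Real.log_le_sub_one_of_pos (by norm_num : (0:ℝ) < 10)
  linarith

lemma log10_pos : 0 < Real.log 10 := Real.log_pos (by norm_num)

lemma exp_diag {R s : ℝ} (hR : 0 < R) (hs : s = Real.log 10 / (3200 * R^4)) {S : ℂ}
    (hS : ‖S‖ ≤ R^2) :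
    ‖Complex.exp (-(s:ℂ) * S^2) - 1‖ ≤ 1/10 := by
  have hs0 : 0 ≤ s := by
    rw [hs]; apply div_nonneg log10_pos.le; positivity
  have habs : ‖-(s:ℂ) * S^2‖ ≤ 9/3200 := by
    rw [norm_mul, norm_neg, Complex.norm_real, Real.norm_eq_abs, norm_pow, abs_of_nonneg hs0]
    have h1 : ‖S‖ ^ 2 ≤ R^4 := by
      calc ‖S‖ ^ 2 ≤ (R^2)^2 := pow_le_pow_left₀ (norm_nonneg S) hS 2
        _ = R^4 := by ring
    calc s * ‖S‖ ^ 2 ≤ s * R^4 := mul_le_mul_of_nonneg_left h1 hs0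
      _ = Real.log 10 / 3200 := by rw [hs]; field_simp
      _ ≤ 9/3200 := by linarith [log10_le]
  have h2 := Complex.norm_exp_sub_one_le (x := -(s:ℂ) * S^2) (habs.trans (by norm_num))
  linarith

lemma exp_cross {R s : ℝ} (hR : 0 < R) (hs : s = Real.log 10 / (3200 * R^4)) {S : ℂ}
    (hS : 6075*R^4 ≤ (S^2).re) :
    ‖Complex.exp (-(s:ℂ) * S^2)‖ ≤ 1/10 := by
  rw [Complex.norm_exp]
  have hre : (-(s:ℂ) * S^2).re = -(s * (S^2).re) := by
    simp [Complex.mul_re]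
  rw [hre]
  have hR4 : 0 < R^4 := by positivity
  have hkey : Real.log 10 ≤ s * (S^2).re := by
    have h1 : s * (6075*R^4) ≤ s * (S^2).re := by
      apply mul_le_mul_of_nonneg_left hS
      rw [hs]; apply div_nonneg log10_pos.le; positivity
    have h2 : Real.log 10 ≤ s * (6075*R^4) := by
      rw [hs, div_mul_eq_mul_div, le_div_iff₀ (by positivity)]
      nlinarith [log10_pos]
    linarith
  calc Real.exp (-(s * (S^2).re)) ≤ Real.exp (-(Real.log 10)) := by
        apply Real.exp_le_exp.mpr; linarith
    _ = 1/10 := by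
        rw [Real.exp_neg, Real.exp_log (by norm_num)]
        norm_num

end Stmt15

open Stmt15 in
/-- the group of translations by real vectors acting on entire functions
on `ℂ^d` has the Runge property. -/
theorem stmt_15 {d : ℕ} (R : ℝ) (hR : 0 < R) :
    ∃ C : ℝ, 0 < C ∧ ∀ N : ℕ, 1 ≤ N → ∀ b : Fin N → EuclideanSpace ℝ (Fin d),
      (∀ i j, i ≠ j → C ≤ ‖b i - b j‖) →
      ∀ g : Fin N → (EuclideanSpace ℂ (Fin d) → ℂ), (∀ i, Differentiable ℂ (g i)) →
      ∀ ε : ℝ, 0 < ε →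
      ∃ f : EuclideanSpace ℂ (Fin d) → ℂ, Differentiable ℂ f ∧
        ∀ i, ∀ z : EuclideanSpace ℂ (Fin d), ‖z‖ ≤ R →
          ‖f (z + embedRC (b i)) - g i z‖ < ε := by
  refine ⟨10 * R, by linarith, ?_⟩
  intro N hN b hsep g hg ε hε
  set s : ℝ := Real.log 10 / (3200 * R^4) with hs
  -- the separating entire functions
  set E : Fin N → EuclideanSpace ℂ (Fin d) → ℂ :=
    fun j z => Complex.exp (-(s:ℂ) * (Q (-(b j)) z)^2) with hE
  have hEdiff : ∀ j, Differentiable ℂ (E j) := by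
    intro j
    apply Complex.differentiable_exp.comp
    exact ((Q_diff (-(b j))).pow 2).const_mul _
  -- evaluation of the quadratic at translated points
  have hQeval : ∀ i j (w : EuclideanSpace ℂ (Fin d)),
      Q (-(b j)) (w + embedRC (b i)) = Q (b i - b j) w := by
    intro i j w
    rw [Q_shift, ← sub_eq_add_neg]
  -- diagonal estimate
  have hdiag : ∀ i (w : EuclideanSpace ℂ (Fin d)), ‖w‖ ≤ R →
      ‖E i (w + embedRC (b i)) - 1‖ ≤ 1/10 := by
    intro i w hw
    rw [hE]
    simp only
    rw [hQeval i i w, sub_self]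
    apply exp_diag hR hs
    calc ‖Q 0 w‖ ≤ ‖w‖^2 := Q_zero_abs w
      _ ≤ R^2 := pow_le_pow_left₀ (norm_nonneg _) hw 2
  -- cross estimate
  have hcross : ∀ i j, i ≠ j → ∀ (w : EuclideanSpace ℂ (Fin d)), ‖w‖ ≤ R →
      ‖E j (w + embedRC (b i))‖ ≤ 1/10 := by
    intro i j hij w hw
    rw [hE]
    simp only
    rw [hQeval i j w]
    apply exp_cross hR hs
    exact cross_re hR (b i - b j) w (hsep i j hij) hw
  -- uniform bound on the translates of the g's
  have hpair : ∀ p : Fin N × Fin N, ∃ Cp : ℝ, ∀ w : EuclideanSpace ℂ (Fin d), ‖w‖ ≤ R →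
      ‖g p.2 (w + embedRC (b p.1) - embedRC (b p.2))‖ ≤ Cp := by
    intro p
    have hcont : ContinuousOn
        (fun w : EuclideanSpace ℂ (Fin d) => g p.2 (w + embedRC (b p.1) - embedRC (b p.2)))
        (Metric.closedBall 0 R) :=
      (((hg p.2).comp ((differentiable_id.add_const _).sub_const _)).continuous).continuousOn
    obtain ⟨Cp, hCp⟩ := (isCompact_closedBall (0 : EuclideanSpace ℂ (Fin d)) R)
      |>.exists_bound_of_continuousOn hcont
    refine ⟨Cp, fun w hw => ?_⟩
    have hmem : w ∈ Metric.closedBall (0 : EuclideanSpace ℂ (Fin d)) R := by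
      rw [Metric.mem_closedBall, dist_zero_right]; exact hw
    simpa using hCp w hmem
  choose Cb hCb using hpair
  set M : ℝ := ∑ p : Fin N × Fin N, |Cb p| with hM
  have hM0 : 0 ≤ M := Finset.sum_nonneg fun p _ => abs_nonneg _
  have hMbound : ∀ i j (w : EuclideanSpace ℂ (Fin d)), ‖w‖ ≤ R →
      ‖g j (w + embedRC (b i) - embedRC (b j))‖ ≤ M := by
    intro i j w hw
    calc ‖g j (w + embedRC (b i) - embedRC (b j))‖ ≤ Cb (i, j) :=
          hCb (i, j) w hw
      _ ≤ |Cb (i, j)| := le_abs_self _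
      _ ≤ M := Finset.single_le_sum (fun p _ => abs_nonneg (Cb p)) (Finset.mem_univ (i, j))
  -- choose the number of iterations
  have hNpos : (0:ℝ) < N := by exact_mod_cast Nat.lt_of_lt_of_le Nat.zero_lt_one hN
  obtain ⟨n, hn⟩ := exists_pow_lt_of_lt_one
    (div_pos hε (by positivity : (0:ℝ) < (M+1) * N)) (by norm_num : (1/3:ℝ) < 1)
  have hn' : (1/3:ℝ)^n * ((M+1) * N) < ε := by
    rw [← lt_div_iff₀ (by positivity : (0:ℝ) < (M+1) * N)]
    exact hn
  -- the approximating entire function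
  refine ⟨fun z => ∑ j, g j (z - embedRC (b j)) * Pit n (E j z), ?_, ?_⟩
  · apply Differentiable.fun_sum
    intro j _
    exact ((hg j).comp (differentiable_id.sub_const _)).mul ((Pit_diff n).comp (hEdiff j))
  · intro i z hz
    have hzi : z + embedRC (b i) - embedRC (b i) = z := add_sub_cancel_right _ _
    have hsplit : (∑ j, g j (z + embedRC (b i) - embedRC (b j)) * Pit n (E j (z + embedRC (b i))))
        - g i z = ∑ j, (g j (z + embedRC (b i) - embedRC (b j)) * Pit n (E j (z + embedRC (b i)))
          - if j = i then g i z else 0) := by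
      rw [Finset.sum_sub_distrib, Finset.sum_ite_eq' Finset.univ i (fun _ => g i z)]
      simp
    rw [hsplit]
    have hterm : ∀ j, ‖
        (g j (z + embedRC (b i) - embedRC (b j)) * Pit n (E j (z + embedRC (b i)))
          - if j = i then g i z else 0)‖ ≤ M * ((1/3:ℝ)^n * (1/10)) := by
      intro j
      by_cases hij : j = i
      · subst hij
        rw [if_pos rfl, hzi]
        have hd := hdiag j z hz
        have h2 : ‖Pit n (E j (z + embedRC (b j))) - 1‖
            ≤ (1/3:ℝ)^n * (1/10) :=
          le_trans (Pit1 hd n) (mul_le_mul_of_nonneg_left hd (by positivity))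
        have h3 : ‖g j z‖ ≤ M := by
          have h4 := hMbound j j z hz
          rwa [hzi] at h4
        have h1 : g j z * Pit n (E j (z + embedRC (b j))) - g j z
            = g j z * (Pit n (E j (z + embedRC (b j))) - 1) := by ring
        rw [h1, norm_mul]
        exact mul_le_mul h3 h2 (norm_nonneg _) hM0
      · rw [if_neg hij, sub_zero, norm_mul]
        have hc := hcross i j (fun h => hij h.symm) z hz
        have h2 : ‖Pit n (E j (z + embedRC (b i)))‖
            ≤ (1/3:ℝ)^n * (1/10) :=
          le_trans (Pit0 hc n) (mul_le_mul_of_nonneg_left hc (by positivity))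
        exact mul_le_mul (hMbound i j z hz) h2 (norm_nonneg _) hM0
    calc ‖∑ j, (g j (z + embedRC (b i) - embedRC (b j))
            * Pit n (E j (z + embedRC (b i))) - if j = i then g i z else 0)‖
        ≤ ∑ j, ‖g j (z + embedRC (b i) - embedRC (b j))
            * Pit n (E j (z + embedRC (b i))) - if j = i then g i z else 0‖ :=
          norm_sum_le _ _
      _ ≤ ∑ _j : Fin N, M * ((1/3:ℝ)^n * (1/10)) := Finset.sum_le_sum fun j _ => hterm j
      _ = N * (M * ((1/3:ℝ)^n * (1/10))) := by
          rw [Finset.sum_const, Finset.card_univ, Fintype.card_fin, nsmul_eq_mul]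
      _ ≤ (1/3:ℝ)^n * ((M+1) * N) := by
          have hp : (0:ℝ) < (1/3:ℝ)^n := by positivity
          have h1 : 0 ≤ (1/3:ℝ)^n * N * M :=
            mul_nonneg (mul_nonneg hp.le hNpos.le) hM0
          have h2 : (0:ℝ) < (1/3:ℝ)^n * N := mul_pos hp hNpos
          nlinarith [h1, h2]
      _ < ε := hn'
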